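/- Suppose dim V = 3. If L is a Lagrangian subspace of V ⊕ V* with dim(L ∩ V*) even, then the type of L is (1,0), (3,0), or (1,2); that is, (dim(L ∩ V), dim(L ∩ V*)) ∈ {(1,0), (3,0), (1,2)}. -/

import Mathlib

/-- The canonical split-signature pairing on `V ⊕ V*`. -/
noncomputable def diracPairing {V : Type*} [AddCommGroup V] [Module ℝ V]
    (x y : V × Module.Dual ℝ V) : ℝ :=
  (x.2 y.1 + y.2 x.1) / 2

/-- `L ⊆ V ⊕ V*` is Lagrangian: `dim L = dim V` and the pairing vanishes on `L`. -/
def IsLagrangian {V : Type*} [AddCommGroup V] [Module ℝ V]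
    (L : Submodule ℝ (V × Module.Dual ℝ V)) : Prop :=
  Module.finrank ℝ L = Module.finrank ℝ V ∧
    ∀ x ∈ L, ∀ y ∈ L, diracPairing x y = 0

/-- The type of a Lagrangian `L`: the pair `(dim(L ∩ V), dim(L ∩ V*))`. -/
noncomputable def lagType {V : Type*} [AddCommGroup V] [Module ℝ V]
    (L : Submodule ℝ (V × Module.Dual ℝ V)) : ℕ × ℕ :=
  (Module.finrank ℝ ↥(L ⊓ LinearMap.range (LinearMap.inl ℝ V (Module.Dual ℝ V))),
   Module.finrank ℝ ↥(L ⊓ LinearMap.range (LinearMap.inr ℝ V (Module.Dual ℝ V))))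

/-- A nondegenerate alternating bilinear form lives on an even-dimensional space. -/
lemma alt_sep_even_finrank_aux {Q : Type*} [AddCommGroup Q] [Module ℝ Q] [FiniteDimensional ℝ Q]
    (B : Q →ₗ[ℝ] Q →ₗ[ℝ] ℝ) (halt : B.IsAlt) (hsep : B.SeparatingLeft) :
    Even (Module.finrank ℝ Q) := by
  classical
  let b := Module.finBasis ℝ Q
  set M := LinearMap.toMatrix₂ b b B with hM
  have hdet : M.det ≠ 0 := (LinearMap.separatingLeft_iff_det_ne_zero b).mp hsep
  have hskew : M.transpose = -M := by
    ext i j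
    simp only [Matrix.transpose_apply, Matrix.neg_apply, hM, LinearMap.toMatrix₂_apply]
    rw [← halt.neg]
  have h1 : M.det = (-1 : ℝ) ^ (Module.finrank ℝ Q) * M.det := by
    conv_lhs => rw [← Matrix.det_transpose, hskew, Matrix.det_neg]
    simp
  have h2 : ((-1 : ℝ) ^ (Module.finrank ℝ Q)) = 1 :=
    mul_right_cancel₀ hdet
      (by linarith [h1] : (-1:ℝ) ^ (Module.finrank ℝ Q) * M.det = 1 * M.det)
  exact (neg_one_pow_eq_one_iff_even (by norm_num : (-1:ℝ) ≠ 1)).mp h2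

/-- An alternating bilinear form has even rank. -/
lemma alt_even_finrank_quotient_aux {Q : Type*} [AddCommGroup Q] [Module ℝ Q]
    [FiniteDimensional ℝ Q] (B : Q →ₗ[ℝ] Q →ₗ[ℝ] ℝ) (halt : B.IsAlt) :
    Even (Module.finrank ℝ (Q ⧸ LinearMap.ker B)) := by
  set K := LinearMap.ker B with hK
  have hy : ∀ x : Q, K ≤ LinearMap.ker (B x) := by
    intro x y hy
    have h0 : B y = 0 := hy
    have hxy : B x y = -B y x := neg_eq_iff_eq_neg.mp (halt.neg x y)
    simp [LinearMap.mem_ker, hxy, h0]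
  let D : Q →ₗ[ℝ] ((Q ⧸ K) →ₗ[ℝ] ℝ) :=
    { toFun := fun x => K.liftQ (B x) (hy x)
      map_add' := by
        intro x x'
        apply Submodule.linearMap_qext
        ext y
        simp
      map_smul' := by
        intro c x
        apply Submodule.linearMap_qext
        ext y
        simp }
  have hD : K ≤ LinearMap.ker D := by
    intro x hx
    have h0 : B x = 0 := hx
    simp only [LinearMap.mem_ker]
    apply Submodule.linearMap_qext
    ext y
    simp [D, h0]
  let B' : (Q ⧸ K) →ₗ[ℝ] ((Q ⧸ K) →ₗ[ℝ] ℝ) := K.liftQ D hD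
  have hB' : ∀ x y : Q, B' (Submodule.Quotient.mk x) (Submodule.Quotient.mk y) = B x y :=
    fun x y => rfl
  have halt' : B'.IsAlt := by
    intro q
    obtain ⟨x, rfl⟩ := Submodule.Quotient.mk_surjective K q
    rw [hB']; exact halt x
  have hsep' : B'.SeparatingLeft := by
    intro q hq
    obtain ⟨x, rfl⟩ := Submodule.Quotient.mk_surjective K q
    rw [Submodule.Quotient.mk_eq_zero]
    show B x = 0
    ext y
    simpa using (hB' x y) ▸ hq (Submodule.Quotient.mk y)
  exact alt_sep_even_finrank_aux B' halt' hsep'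

/-- The key dimension count, for an abstract `3`-dimensional module `M` mapping to `V × V*`. -/
lemma generic_lagrangian_types {V M : Type*} [AddCommGroup V] [Module ℝ V]
    [FiniteDimensional ℝ V] [AddCommGroup M] [Module ℝ M] [FiniteDimensional ℝ M]
    (hdim : Module.finrank ℝ V = 3) (hM : Module.finrank ℝ M = 3)
    (π : M →ₗ[ℝ] V) (δ : M →ₗ[ℝ] Module.Dual ℝ V)
    (hpair : ∀ x y : M, δ x (π y) + δ y (π x) = 0)
    (hinj : ∀ x : M, π x = 0 → δ x = 0 → x = 0)
    (heven : Even (Module.finrank ℝ (LinearMap.ker π))) :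
    (Module.finrank ℝ (LinearMap.ker δ), Module.finrank ℝ (LinearMap.ker π)) ∈
      ({(1, 0), (3, 0), (1, 2)} : Set (ℕ × ℕ)) := by
  classical
  set B : M →ₗ[ℝ] M →ₗ[ℝ] ℝ := LinearMap.mk₂ ℝ (fun x y => δ x (π y))
      (by intro x x' y; simp)
      (by intro c x y; simp)
      (by intro x y y'; simp)
      (by intro c x y; simp) with hB
  have hBapp : ∀ x y : M, B x y = δ x (π y) := fun _ _ => rfl
  have halt : B.IsAlt := by
    intro x
    have h := hpair x x
    rw [hBapp]
    linarith
  have hskew : ∀ x y : M, δ x (π y) = -δ y (π x) := by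
    intro x y; have := hpair x y; linarith
  set E := LinearMap.range π with hE
  have hEl : Module.finrank ℝ E + Module.finrank ℝ (LinearMap.ker π) = 3 := by
    have h := LinearMap.finrank_range_add_finrank_ker (K := ℝ) (V := M) π
    rw [hM] at h
    exact h
  have hAnnE : Module.finrank ℝ E.dualAnnihilator + Module.finrank ℝ E = 3 := by
    have h1 := LinearEquiv.finrank_eq (R := ℝ) (M := V ⧸ E) (N := E.dualAnnihilator)
      (Subspace.quotEquivAnnihilator E)
    have h2 := Submodule.finrank_quotient_add_finrank (R := ℝ) E
    rw [hdim] at h2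
    omega
  set g : (LinearMap.ker π) →ₗ[ℝ] Module.Dual ℝ V := δ.comp (LinearMap.ker π).subtype with hg
  have hginj : Function.Injective g := by
    rw [← LinearMap.ker_eq_bot]
    apply (Submodule.eq_bot_iff _).mpr
    rintro ⟨z, hz⟩ hgz
    have h1 : π z = 0 := hz
    have h2 : δ z = 0 := hgz
    exact Subtype.ext (hinj z h1 h2)
  have hgrange : LinearMap.range g = E.dualAnnihilator := by
    apply Submodule.eq_of_le_of_finrank_le
    · rintro ξ ⟨⟨z, hz⟩, rfl⟩
      rw [Submodule.mem_dualAnnihilator]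
      rintro w ⟨y, rfl⟩
      have h1 : π z = 0 := hz
      have h2 := hskew z y
      simp only [hg, LinearMap.comp_apply, Submodule.coe_subtype]
      rw [h2, h1]
      simp
    · have h3 := LinearMap.finrank_range_add_finrank_ker (K := ℝ) (V := LinearMap.ker π) g
      have h4 : LinearMap.ker g = ⊥ := LinearMap.ker_eq_bot.mpr hginj
      rw [h4, finrank_bot] at h3
      omega
  have hker : LinearMap.ker B = LinearMap.ker δ ⊔ LinearMap.ker π := by
    apply le_antisymm
    · intro x hx
      have hx' : ∀ y : M, δ x (π y) = 0 := by
        intro y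
        have h0 : B x = 0 := hx
        have := congrFun (congrArg DFunLike.coe h0) y
        simpa [hBapp] using this
      have hann : δ x ∈ E.dualAnnihilator := by
        rw [Submodule.mem_dualAnnihilator]
        rintro w ⟨y, rfl⟩
        exact hx' y
      rw [← hgrange] at hann
      obtain ⟨⟨z, hz⟩, hzeq⟩ := hann
      have hzδ : δ z = δ x := hzeq
      rw [Submodule.mem_sup]
      refine ⟨x - z, ?_, z, hz, by abel⟩
      rw [LinearMap.mem_ker, map_sub, hzδ, sub_self]
    · apply sup_le
      · intro x hx
        have hδ : δ x = 0 := hx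
        rw [LinearMap.mem_ker]
        ext y
        simp [hBapp, hδ]
      · intro x hx
        have hπ : π x = 0 := hx
        rw [LinearMap.mem_ker]
        ext y
        rw [hBapp x y, hskew x y, hπ]
        simp
  have hdisj : LinearMap.ker δ ⊓ LinearMap.ker π = ⊥ := by
    apply (Submodule.eq_bot_iff _).mpr
    rintro x ⟨h1, h2⟩
    exact hinj x h2 h1
  have hsum : Module.finrank ℝ (LinearMap.ker B) =
      Module.finrank ℝ (LinearMap.ker δ) + Module.finrank ℝ (LinearMap.ker π) := by
    have h := Submodule.finrank_sup_add_finrank_inf_eq (LinearMap.ker δ) (LinearMap.ker π)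
    rw [hdisj, finrank_bot, ← hker] at h
    omega
  have heq : Even (Module.finrank ℝ (M ⧸ LinearMap.ker B)) :=
    alt_even_finrank_quotient_aux B halt
  have htot := Submodule.finrank_quotient_add_finrank (R := ℝ) (LinearMap.ker B)
  rw [hM] at htot
  obtain ⟨m, hm⟩ := heq
  obtain ⟨a, ha⟩ := heven
  simp only [Set.mem_insert_iff, Set.mem_singleton_iff, Prod.mk.injEq]
  omega


/-- For `dim V = 3`: an even Lagrangian has type `(1,0)`, `(3,0)`, or `(1,2)`. -/
theorem even_lagrangian_types_dim_three
    (V : Type*) [AddCommGroup V] [Module ℝ V] [FiniteDimensional ℝ V]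
    (hdim : Module.finrank ℝ V = 3)
    (L : Submodule ℝ (V × Module.Dual ℝ V)) (hL : IsLagrangian L)
    (heven : Even (lagType L).2) :
    lagType L ∈ ({(1, 0), (3, 0), (1, 2)} : Set (ℕ × ℕ)) := by
  classical
  obtain ⟨hrank, hzero⟩ := hL
  set π := (LinearMap.fst ℝ V (Module.Dual ℝ V)).comp L.subtype with hπ
  set δ := (LinearMap.snd ℝ V (Module.Dual ℝ V)).comp L.subtype with hδ
  have hM : Module.finrank ℝ L = 3 := hrank.trans hdim
  have hpair : ∀ x y : L, δ x (π y) + δ y (π x) = 0 := by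
    rintro ⟨x, hx⟩ ⟨y, hy⟩
    have h := hzero x hx y hy
    simp only [diracPairing] at h
    have : x.2 y.1 + y.2 x.1 = 0 := by
      field_simp at h
      linarith
    simpa [hπ, hδ] using this
  have hinj : ∀ x : L, π x = 0 → δ x = 0 → x = 0 := by
    rintro ⟨x, hx⟩ h1 h2
    have e1 : x.1 = 0 := h1
    have e2 : x.2 = 0 := h2
    apply Subtype.ext
    exact Prod.ext e1 e2
  -- identify the kernels with the intersections
  have hkπ : Submodule.map L.subtype (LinearMap.ker π) =
      L ⊓ LinearMap.range (LinearMap.inr ℝ V (Module.Dual ℝ V)) := by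
    rw [hπ, LinearMap.ker_comp, LinearMap.ker_fst, Submodule.map_comap_subtype]
  have hkδ : Submodule.map L.subtype (LinearMap.ker δ) =
      L ⊓ LinearMap.range (LinearMap.inl ℝ V (Module.Dual ℝ V)) := by
    rw [hδ, LinearMap.ker_comp, LinearMap.ker_snd, Submodule.map_comap_subtype]
  have e2 := Submodule.finrank_map_subtype_eq L (LinearMap.ker π)
  rw [hkπ] at e2
  have e1 := Submodule.finrank_map_subtype_eq L (LinearMap.ker δ)
  rw [hkδ] at e1
  have heven' := heven
  simp only [lagType] at heven'
  rw [e2] at heven'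
  have hres := generic_lagrangian_types (V := V) (M := ↥L) hdim hM π δ hpair hinj (by exact heven')
  rw [← e1, ← e2] at hres
  simpa [lagType] using hres
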